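/- arXiv:1903.06456 — 5 statements merged into one kernel-verified Lean document; each statement's English description precedes it below -/
import Mathlib

section
/- Let F be the field ℝ or ℂ and let X be a normed F-vector space whose algebraic dimension equals 2^κ for some infinite cardinal κ. Then the completion of X has the same algebraic dimension as X. -/
open Cardinal

/-- If `X` is a normed space over `F ∈ {ℝ, ℂ}` whose algebraic dimension
equals `2 ^ κ` for some infinite cardinal `κ`, then the completion of `X` has the same
algebraic dimension as `X`. -/
theorem stmt3 (F : Type) [RCLike F] (X : Type) [NormedAddCommGroup X] [NormedSpace F X]
    (κ : Cardinal) (hκ : ℵ₀ ≤ κ) (h : Module.rank F X = 2 ^ κ) :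
    Module.rank F (UniformSpace.Completion X) = Module.rank F X := by
  have h2κ : (ℵ₀ : Cardinal) ≤ 2 ^ κ := hκ.trans (le_of_lt (cantor κ))
  -- lower bound
  have hlow : Module.rank F X ≤ Module.rank F (UniformSpace.Completion X) :=
    LinearMap.rank_le_of_injective (UniformSpace.Completion.toComplL (𝕜 := F) (E := X)).toLinearMap
      (UniformSpace.Completion.coe_injective X)
  -- #F ≤ 2 ^ κ
  have hcont : (𝔠 : Cardinal) ≤ 2 ^ κ := by
    rw [← two_power_aleph0]
    exact power_le_power_left two_ne_zero hκ
  have hF : (#F : Cardinal) ≤ 2 ^ κ := by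
    have b := Module.finBasis ℝ F
    have : #F = (𝔠 : Cardinal) ^ (Module.finrank ℝ F) := by
      rw [mk_congr b.repr.toEquiv, mk_finsupp_of_fintype, mk_real, Fintype.card_fin]
    rw [this]
    exact (power_nat_le (aleph0_le_continuum)).trans hcont
  -- #X ≤ 2 ^ κ
  have hXcard : (#X : Cardinal) = 2 ^ κ := by
    refine le_antisymm ?_ (h ▸ rank_le_card F X)
    have b := Module.Basis.ofVectorSpace F X
    have hι : #(Module.Basis.ofVectorSpaceIndex F X) = 2 ^ κ := by
      rw [b.mk_eq_rank'', h]
    have : Infinite (Module.Basis.ofVectorSpaceIndex F X) :=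
      Cardinal.infinite_iff.mpr (hι ▸ h2κ)
    rw [mk_congr b.repr.toEquiv, mk_finsupp_of_infinite, hι]
    exact max_le le_rfl hF
  -- surjection from sequences onto completion
  have hsurj : ∃ g : (ℕ → X) → UniformSpace.Completion X, Function.Surjective g := by
    refine ⟨fun u => Filter.limUnder Filter.atTop (fun n => (u n : UniformSpace.Completion X)),
      fun y => ?_⟩
    have hd := UniformSpace.Completion.denseRange_coe (α := X)
    have : ∀ n : ℕ, ∃ x : X, dist y (x : UniformSpace.Completion X) < 1 / (n + 1) := by
      intro n
      exact Metric.denseRange_iff.mp hd y (1 / (n + 1)) (by positivity)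
    choose u hu using this
    refine ⟨u, Filter.Tendsto.limUnder_eq ?_⟩
    rw [tendsto_iff_dist_tendsto_zero]
    refine squeeze_zero (fun n => dist_nonneg) (fun n => ?_) tendsto_one_div_add_atTop_nhds_zero_nat
    rw [dist_comm]
    exact (hu n).le
  -- upper bound
  have hup : Module.rank F (UniformSpace.Completion X) ≤ 2 ^ κ := by
    obtain ⟨g, hg⟩ := hsurj
    calc Module.rank F (UniformSpace.Completion X) ≤ #(UniformSpace.Completion X) :=
          rank_le_card _ _
      _ ≤ #(ℕ → X) := mk_le_of_surjective hg
      _ = (#X) ^ (ℵ₀ : Cardinal) := by simp [mk_arrow]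
      _ = (2 ^ κ) ^ (ℵ₀ : Cardinal) := by rw [hXcard]
      _ = 2 ^ κ := by rw [← power_mul, mul_aleph0_eq hκ]
  rw [h]
  exact le_antisymm hup (h ▸ hlow)
end

section
/- Every infinite-dimensional Banach space over the field ℝ or ℂ has algebraic dimension at least 2^ℵ₀; in particular, there is no Banach space whose algebraic dimension equals ℵ₀. -/
open Cardinal

variable {F : Type} [RCLike F] {X : Type} [NormedAddCommGroup X] [NormedSpace F X]

lemma aux_sep (p : Submodule F X) [FiniteDimensional F p] {x : X} (hx : x ∉ p) :
    ∃ f : X →L[F] F, f x = 1 ∧ ∀ y ∈ p, f y = 0 := by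
  haveI : IsClosed (p : Set X) := Submodule.closed_of_finiteDimensional p
  set Q : X →L[F] X ⧸ p :=
    LinearMap.mkContinuous p.mkQ 1 (fun m => by
      simpa using Submodule.Quotient.norm_mk_le p m) with hQ
  have hx0 : Q x ≠ 0 := by
    simpa [hQ, LinearMap.mkContinuous_apply, Submodule.Quotient.mk_eq_zero] using hx
  obtain ⟨g, hg⟩ := SeparatingDual.exists_eq_one (R := F) hx0
  refine ⟨g.comp Q, hg, fun y hy => ?_⟩
  have hQy : Q y = 0 := by
    simpa [hQ, LinearMap.mkContinuous_apply, Submodule.Quotient.mk_eq_zero] using hy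
  simp [hQy]

lemma aux_step (h : ℵ₀ ≤ Module.rank F X) (n : ℕ) (xs : Fin n → X) (fs : Fin n → X →L[F] F) :
    ∃ (x : X) (f : X →L[F] F), ‖x‖ = 1 ∧ (∀ m, fs m x = 0) ∧ f x = 1 ∧ ∀ m, f (xs m) = 0 := by
  classical
  set p : Submodule F X := Submodule.span F (Set.range xs) with hp
  haveI : FiniteDimensional F p := FiniteDimensional.span_of_finite F (Set.finite_range xs)
  set Φ : X →ₗ[F] (Fin n → F) := LinearMap.pi (fun m => (fs m : X →ₗ[F] F)) with hΦ
  have hK : ∃ x ∈ LinearMap.ker Φ, x ∉ p := by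
    by_contra hcon
    push_neg at hcon
    have hle : LinearMap.ker Φ ≤ p := hcon
    have h1 : Module.rank F (LinearMap.ker Φ) < ℵ₀ :=
      (Submodule.rank_mono hle).trans_lt (Module.rank_lt_aleph0 F p)
    have h2 : Module.rank F (LinearMap.range Φ) < ℵ₀ := Module.rank_lt_aleph0 F _
    have h3 := LinearMap.rank_range_add_rank_ker Φ
    exact absurd (h3 ▸ Cardinal.add_lt_aleph0 h2 h1) h.not_gt
  obtain ⟨x, hxK, hxp⟩ := hK
  have hx0 : x ≠ 0 := fun h0 => hxp (h0 ▸ p.zero_mem)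
  have hnx : ‖x‖ ≠ 0 := norm_ne_zero_iff.2 hx0
  set c : F := ((‖x‖⁻¹ : ℝ) : F) with hc
  set y : X := c • x with hy
  have hyp : y ∉ p := by
    intro hmem
    apply hxp
    have : ((‖x‖ : ℝ) : F) • y = x := by
      rw [hy, smul_smul, hc, ← RCLike.ofReal_mul, mul_inv_cancel₀ hnx]
      simp
    rw [← this]
    exact p.smul_mem _ hmem
  obtain ⟨f, hf1, hf0⟩ := aux_sep p hyp
  refine ⟨y, f, ?_, ?_, hf1, ?_⟩
  · rw [hy, norm_smul, hc, RCLike.norm_ofReal, abs_of_nonneg (by positivity),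
      inv_mul_cancel₀ hnx]
  · intro m
    have : fs m x = 0 := by
      have := LinearMap.mem_ker.1 hxK
      exact congrFun (by simpa [hΦ] using this) m
    simp [hy, this]
  · intro m
    exact hf0 _ (Submodule.subset_span ⟨m, rfl⟩)

noncomputable def auxSeq (h : ℵ₀ ≤ Module.rank F X) : (n : ℕ) → X × (X →L[F] F)
  | n =>
    ⟨(aux_step h n (fun m : Fin n => (auxSeq h m).1) (fun m : Fin n => (auxSeq h m).2)).choose,
     (aux_step h n (fun m : Fin n => (auxSeq h m).1)
        (fun m : Fin n => (auxSeq h m).2)).choose_spec.choose⟩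
  decreasing_by all_goals exact m.isLt

lemma auxSeq_spec (h : ℵ₀ ≤ Module.rank F X) (n : ℕ) :
    ‖(auxSeq h n).1‖ = 1 ∧ (∀ m : Fin n, (auxSeq h m).2 (auxSeq h n).1 = 0) ∧
      (auxSeq h n).2 (auxSeq h n).1 = 1 ∧ ∀ m : Fin n, (auxSeq h n).2 ((auxSeq h m).1) = 0 := by
  have e : auxSeq h n =
      ⟨(aux_step h n (fun m : Fin n => (auxSeq h m).1) (fun m : Fin n => (auxSeq h m).2)).choose,
       (aux_step h n (fun m : Fin n => (auxSeq h m).1)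
          (fun m : Fin n => (auxSeq h m).2)).choose_spec.choose⟩ := by
    rw [auxSeq]
  rw [e]
  exact (aux_step h n (fun m : Fin n => (auxSeq h m).1)
    (fun m : Fin n => (auxSeq h m).2)).choose_spec.choose_spec

lemma exists_biorthogonal (h : ℵ₀ ≤ Module.rank F X) :
    ∃ (x : ℕ → X) (f : ℕ → X →L[F] F), (∀ n, ‖x n‖ = 1) ∧
      (∀ n, f n (x n) = 1) ∧ ∀ n m, n ≠ m → f n (x m) = 0 := by
  refine ⟨fun n => (auxSeq h n).1, fun n => (auxSeq h n).2, fun n => (auxSeq_spec h n).1,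
    fun n => (auxSeq_spec h n).2.2.1, fun n m hnm => ?_⟩
  rcases lt_or_gt_of_ne hnm with hlt | hgt
  · exact (auxSeq_spec h m).2.1 ⟨n, hlt⟩
  · exact (auxSeq_spec h n).2.2.2 ⟨m, hgt⟩

lemma aux_continuum_le [CompleteSpace X] (h : ℵ₀ ≤ Module.rank F X) :
    Cardinal.continuum ≤ Module.rank F X := by
  classical
  obtain ⟨x, f, hx1, hf1, hf0⟩ := exists_biorthogonal h
  have hsum : ∀ t : Set.Ioo (0:ℝ) 1, Summable (fun n : ℕ => (((t : ℝ) : F))^n • x n) := by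
    intro t
    apply Summable.of_norm_bounded
      (summable_geometric_of_lt_one t.2.1.le t.2.2)
    intro n
    rw [norm_smul, norm_pow, RCLike.norm_ofReal, abs_of_pos t.2.1, hx1 n, mul_one]
  set v : Set.Ioo (0:ℝ) 1 → X := fun t => ∑' n : ℕ, (((t : ℝ) : F))^n • x n with hv
  have hfv : ∀ (m : ℕ) (t : Set.Ioo (0:ℝ) 1), f m (v t) = (((t : ℝ) : F))^m := by
    intro m t
    rw [hv, ContinuousLinearMap.map_tsum (f m) (hsum t)]
    have heq : ∀ n : ℕ, f m ((((t : ℝ) : F))^n • x n) =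
        if n = m then (((t : ℝ) : F))^m else 0 := by
      intro n
      rcases eq_or_ne n m with rfl | hnm
      · simp [hf1 n]
      · simp [hf0 m n (Ne.symm hnm), hnm]
    calc ∑' n : ℕ, f m ((((t : ℝ) : F))^n • x n)
        = ∑' n : ℕ, if n = m then (((t : ℝ) : F))^m else 0 := by
          exact tsum_congr heq
      _ = (((t : ℝ) : F))^m := tsum_ite_eq m _
  have hli : LinearIndependent F v := by
    rw [linearIndependent_iff']
    intro s g hg i hi
    have key : ∀ m : ℕ, ∑ j ∈ s, g j * (((j : ℝ) : F))^m = 0 := by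
      intro m
      have := congrArg (f m) hg
      rw [map_sum, map_zero] at this
      simpa [hfv, smul_eq_mul] using this
    set k := s.card with hk
    set e := s.equivFin with he
    set a : Fin k → F := fun i => (((e.symm i : Set.Ioo (0:ℝ) 1) : ℝ) : F) with ha
    have hainj : Function.Injective a := by
      intro i j hij
      have hij' : ((((e.symm i : Set.Ioo (0:ℝ) 1)) : ℝ) : F) =
          ((((e.symm j : Set.Ioo (0:ℝ) 1)) : ℝ) : F) := hij
      apply e.symm.injective
      apply Subtype.ext
      apply Subtype.ext
      exact_mod_cast hij'
    set c : Fin k → F := fun i => g (e.symm i) with hc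
    have hzero : ∀ m : Fin k, ∑ j : Fin k, c j * a j ^ (m : ℕ) = 0 := by
      intro m
      have h1 : ∑ j : Fin k, c j * a j ^ (m : ℕ) =
          ∑ j : {y // y ∈ s}, g j * (((j : ℝ) : F))^(m : ℕ) := by
        rw [← Equiv.sum_comp e.symm (fun j : {y // y ∈ s} => g j * (((j : ℝ) : F))^(m : ℕ))]
      rw [h1, Finset.sum_coe_sort s (fun j => g j * (((j : ℝ) : F))^(m : ℕ))]
      exact key m
    have hc0 := Matrix.eq_zero_of_forall_pow_sum_mul_pow_eq_zero hainj hzero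
    have : c (e ⟨i, hi⟩) = 0 := by rw [hc0]; rfl
    simpa [hc] using this
  calc Cardinal.continuum = #(Set.Ioo (0:ℝ) 1) := (Cardinal.mk_Ioo_real zero_lt_one).symm
    _ ≤ Module.rank F X := hli.cardinal_le_rank

/-- Every infinite-dimensional Banach space over `F ∈ {ℝ, ℂ}` has algebraic
dimension at least `2 ^ ℵ₀`; in particular, no Banach space has algebraic dimension
exactly `ℵ₀`. -/
theorem stmt4 (F : Type) [RCLike F] (X : Type) [NormedAddCommGroup X] [NormedSpace F X]
    [CompleteSpace X] :
    (ℵ₀ ≤ Module.rank F X → Cardinal.continuum ≤ Module.rank F X) ∧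
    Module.rank F X ≠ ℵ₀ := by
  refine ⟨fun h => aux_continuum_le h, fun heq => ?_⟩
  have h2 := aux_continuum_le (F := F) (X := X) heq.ge
  rw [heq] at h2
  exact absurd h2 Cardinal.aleph0_lt_continuum.not_ge
end

section
/- Every infinite-dimensional separable Banach space over the field ℝ or ℂ has algebraic dimension exactly 2^ℵ₀. -/
open Cardinal Filter Topology

/-- A separable metric space has cardinality at most continuum. -/
lemma mk_le_continuum_of_separable (X : Type) [MetricSpace X]
    [TopologicalSpace.SeparableSpace X] : #X ≤ 𝔠 := by
  obtain ⟨s, hsc, hsd⟩ := TopologicalSpace.exists_countable_dense X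
  have key : ∀ x : X, ∃ u : ℕ → s, Tendsto (fun n => (u n : X)) atTop (𝓝 x) := by
    intro x
    obtain ⟨u, hu, hlim⟩ := mem_closure_iff_seq_limit.mp (hsd x)
    exact ⟨fun n => ⟨u n, hu n⟩, hlim⟩
  choose u hu using key
  have hinj : Function.Injective u := by
    intro x y hxy
    exact tendsto_nhds_unique (hu x) (hxy ▸ hu y)
  calc #X ≤ #(ℕ → s) := Cardinal.mk_le_of_injective hinj
    _ = (#s) ^ (ℵ₀ : Cardinal) := by rw [← Cardinal.mk_nat, ← Cardinal.power_def]
    _ ≤ (ℵ₀ : Cardinal) ^ (ℵ₀ : Cardinal) := by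
        haveI := hsc.to_subtype
        exact Cardinal.power_le_power_right Cardinal.mk_le_aleph0
    _ = 𝔠 := Cardinal.aleph0_power_aleph0


section helpers
variable (F : Type) [RCLike F] {X : Type} [NormedAddCommGroup X] [NormedSpace F X]

lemma exists_sep_functional (S : Submodule F X) (hS : IsClosed (S : Set X)) {x : X} (hx : x ∉ S) :
    ∃ f : X →L[F] F, f x = 1 ∧ ∀ y ∈ S, f y = 0 := by
  haveI := hS
  let π : X →L[F] X ⧸ S :=
    LinearMap.mkContinuous S.mkQ 1 (fun y => by
      simpa using Submodule.Quotient.norm_mk_le S y)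
  have hπx : π x ≠ 0 := by
    simp only [π, LinearMap.mkContinuous_apply, Submodule.mkQ_apply]
    rw [Ne, Submodule.Quotient.mk_eq_zero]
    exact hx
  obtain ⟨g, hg⟩ := SeparatingDual.exists_eq_one (R := F) hπx
  refine ⟨g.comp π, by simpa using hg, fun y hy => ?_⟩
  have : π y = 0 := by
    simp only [π, LinearMap.mkContinuous_apply, Submodule.mkQ_apply]
    exact (Submodule.Quotient.mk_eq_zero S).2 hy
  simp [this]

end helpers

set_option maxHeartbeats 2000000 in
theorem continuum_le_rank_aux (F : Type) [RCLike F] (X : Type) [NormedAddCommGroup X] [NormedSpace F X]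
    [CompleteSpace X]
    (h : ℵ₀ ≤ Module.rank F X) :
    𝔠 ≤ Module.rank F X := by
  -- a linearly independent sequence
  obtain ⟨sE, hsE, hli⟩ := le_rank_iff_exists_linearIndependent.mp h
  obtain ⟨eqv⟩ := Cardinal.eq.1 (hsE.trans Cardinal.mk_nat.symm)
  set v : ℕ → X := fun n => (eqv.symm n : X) with hv_def
  have hv : LinearIndependent F v := hli.comp eqv.symm eqv.symm.injective
  have hvne : ∀ n, v n ≠ 0 := fun n => hv.ne_zero n
  -- normalize it
  let w : ℕ → Fˣ := fun n => Units.mk0 ((‖v n‖⁻¹ : ℝ) : F)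
    (by simp [RCLike.ofReal_eq_zero, norm_eq_zero, hvne n])
  let u : ℕ → X := fun n => ((‖v n‖⁻¹ : ℝ) : F) • v n
  have hu : LinearIndependent F u := by
    have heq : u = w • v := by
      funext n
      simp [u, w, Units.smul_def]
    rw [heq]
    exact hv.units_smul w
  have hunorm : ∀ n, ‖u n‖ = 1 := by
    intro n
    simp only [u, norm_smul, RCLike.norm_ofReal, abs_inv, abs_norm]
    field_simp [hvne n]
  -- biorthogonal functionals
  have hstep : ∀ n, ∃ f : X →L[F] F, f (u n) = 1 ∧ ∀ k, k < n → f (u k) = 0 := by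
    intro n
    have hfin : (u '' {k | k < n}).Finite := (Set.finite_Iio n).image u
    haveI := FiniteDimensional.span_of_finite F hfin
    have hclosed := Submodule.closed_of_finiteDimensional
      (Submodule.span F (u '' {k | k < n}))
    have hnotmem : u n ∉ Submodule.span F (u '' {k | k < n}) :=
      hu.notMem_span_image (by simp)
    obtain ⟨f, hf1, hf0⟩ := exists_sep_functional F _ hclosed hnotmem
    exact ⟨f, hf1, fun k hk => hf0 _ (Submodule.subset_span ⟨k, hk, rfl⟩)⟩
  choose f hf1 hf0 using hstep
  -- the scaling constants
  set R : ℕ → ℝ := fun n => 1 + ∑ k ∈ Finset.range (n+1), ‖f k‖ with hR_def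
  have hR1 : ∀ n, 1 ≤ R n := by
    intro n
    have : (0:ℝ) ≤ ∑ k ∈ Finset.range (n+1), ‖f k‖ :=
      Finset.sum_nonneg fun _ _ => norm_nonneg _
    simp only [R]; linarith
  have hRf : ∀ k n, k ≤ n → ‖f k‖ ≤ R n := by
    intro k n hkn
    have h1 : ‖f k‖ ≤ ∑ j ∈ Finset.range (n+1), ‖f j‖ :=
      Finset.single_le_sum (fun j _ => norm_nonneg (f j))
        (Finset.mem_range.2 (Nat.lt_succ_of_le hkn))
    simp only [R]; linarith
  have hRmono : Monotone R := by
    intro a b hab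
    simp only [R]
    have := Finset.sum_le_sum_of_subset_of_nonneg
      (Finset.range_subset_range.2 (Nat.succ_le_succ hab))
      (fun j _ _ => norm_nonneg (f j))
    linarith
  set c : ℕ → ℝ := fun n => ((8 * R n) ^ n)⁻¹ with hc_def
  have h8R : ∀ n, (1:ℝ) ≤ 8 * R n := by
    intro n; have := hR1 n; linarith
  have hc_pos : ∀ n, 0 < c n := by
    intro n
    have : (0:ℝ) < (8 * R n) ^ n := pow_pos (by linarith [hR1 n]) n
    exact inv_pos.2 this
  have hc_le : ∀ n, c n ≤ (1/8)^n := by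
    intro n
    have hcn : c n = ((8 * R n)⁻¹)^n := by simp only [c]; rw [inv_pow]
    rw [hcn, one_div]
    apply pow_le_pow_left₀ (by positivity)
    rw [inv_le_inv₀ (by linarith [hR1 n]) (by norm_num)]
    linarith [hR1 n]
  have hkey : ∀ n m, n < m → c m * ‖f n‖ ≤ (1/8)^(m-n) * c n := by
    intro n m hnm
    have hRm := hR1 m
    have hRn := hR1 n
    have h8m : (0:ℝ) < 8 * R m := by linarith
    have h8n : (0:ℝ) < 8 * R n := by linarith
    have hmain : ‖f n‖ * ((8:ℝ)^(m-n) * (8 * R n) ^ n) ≤ (8 * R m) ^ m := by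
      have hsplit : (8 * R m) ^ m = (8 * R m) ^ (m - n) * (8 * R m) ^ n := by
        rw [← pow_add, Nat.sub_add_cancel hnm.le]
      have h1 : (8:ℝ)^(m-n) * R m ≤ (8 * R m) ^ (m - n) := by
        rw [mul_pow]
        have : R m = R m ^ 1 := (pow_one _).symm
        calc (8:ℝ)^(m-n) * R m ≤ (8:ℝ)^(m-n) * R m ^ (m-n) := by
              apply mul_le_mul_of_nonneg_left _ (by positivity)
              calc R m = R m ^ 1 := (pow_one _).symm
                _ ≤ R m ^ (m - n) :=
                  pow_le_pow_right₀ hRm (by omega)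
          _ = _ := rfl
      have h2 : (8 * R n) ^ n ≤ (8 * R m) ^ n := by
        apply pow_le_pow_left₀ (by linarith) (by linarith [hRmono hnm.le])
      have hfRm : ‖f n‖ ≤ R m := hRf n m hnm.le
      calc ‖f n‖ * ((8:ℝ)^(m-n) * (8 * R n) ^ n)
          ≤ R m * ((8:ℝ)^(m-n) * (8 * R m) ^ n) := by
            apply mul_le_mul hfRm _ (by positivity) (by linarith)
            exact mul_le_mul_of_nonneg_left h2 (by positivity)
        _ = ((8:ℝ)^(m-n) * R m) * (8 * R m) ^ n := by ring
        _ ≤ (8 * R m) ^ (m - n) * (8 * R m) ^ n :=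
            mul_le_mul_of_nonneg_right h1 (by positivity)
        _ = (8 * R m) ^ m := hsplit.symm
    have hpow8 : ((1:ℝ)/8)^(m-n) = ((8:ℝ)^(m-n))⁻¹ := by
      rw [one_div, inv_pow]
    have ha : (0:ℝ) < (8 * R m) ^ m := by positivity
    have hb : (0:ℝ) < (8:ℝ)^(m-n) * (8 * R n) ^ n := by positivity
    rw [hpow8]
    simp only [c]
    rw [← mul_inv, mul_comm, ← div_eq_mul_inv, inv_eq_one_div,
      div_le_div_iff₀ ha hb, one_mul]
    exact hmain
  -- the continuum family
  set xx : ℝ → X := fun t => ∑' m, ((c m * t ^ m : ℝ) : F) • u m with hxx_def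
  have hterm_norm : ∀ (t : ℝ), t ∈ Set.Ioo (0:ℝ) 1 → ∀ m,
      ‖((c m * t ^ m : ℝ) : F) • u m‖ ≤ (1/8)^m := by
    intro t ht m
    obtain ⟨ht0, ht1⟩ := ht
    rw [norm_smul, RCLike.norm_ofReal, hunorm m, mul_one]
    have htm : (0:ℝ) < t ^ m := pow_pos ht0 m
    rw [abs_of_pos (by positivity)]
    calc c m * t ^ m ≤ c m * 1 := by
          apply mul_le_mul_of_nonneg_left _ (hc_pos m).le
          exact pow_le_one₀ ht0.le ht1.le
      _ = c m := mul_one _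
      _ ≤ (1/8)^m := hc_le m
  have hsummable : ∀ (t : ℝ), t ∈ Set.Ioo (0:ℝ) 1 →
      Summable (fun m => ((c m * t ^ m : ℝ) : F) • u m) := by
    intro t ht
    apply Summable.of_norm_bounded _ (hterm_norm t ht)
    exact summable_geometric_of_lt_one (by norm_num) (by norm_num)
  have happly : ∀ n (t : ℝ), t ∈ Set.Ioo (0:ℝ) 1 →
      ‖f n (xx t) - ((c n * t ^ n : ℝ) : F)‖ ≤ c n * t ^ (n+1) / 2 := by
    intro n t ht
    obtain ⟨ht0, ht1⟩ := ht
    have hsum := hsummable t ⟨ht0, ht1⟩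
    have hmap : f n (xx t) = ∑' m, ((c m * t ^ m : ℝ) : F) * f n (u m) := by
      rw [hxx_def]
      rw [ContinuousLinearMap.map_tsum (f n) hsum]
      congr 1
      funext m
      rw [map_smul, smul_eq_mul]
    have hsum2 : Summable (fun m => ((c m * t ^ m : ℝ) : F) * f n (u m)) := by
      have h2 : Summable (fun m => f n (((c m * t ^ m : ℝ) : F) • u m)) :=
        hsum.map (f n).toLinearMap.toAddMonoidHom (f n).continuous
      simpa [map_smul, smul_eq_mul] using h2
    have hsplit := Summable.sum_add_tsum_nat_add (f := fun m => ((c m * t ^ m : ℝ) : F) * f n (u m))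
      (n+1) hsum2
    have hhead : ∑ m ∈ Finset.range (n+1), ((c m * t ^ m : ℝ) : F) * f n (u m)
        = ((c n * t ^ n : ℝ) : F) := by
      rw [Finset.sum_eq_single n]
      · rw [hf1 n, mul_one]
      · intro m hm hmn
        have : m < n := lt_of_le_of_ne (Nat.lt_succ_iff.1 (Finset.mem_range.1 hm)) hmn
        rw [hf0 n m this, mul_zero]
      · intro hn
        exact absurd (Finset.self_mem_range_succ n) hn
    have htail : f n (xx t) - ((c n * t ^ n : ℝ) : F)
        = ∑' i, ((c (i + (n+1)) * t ^ (i + (n+1)) : ℝ) : F) * f n (u (i + (n+1))) := by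
      rw [hmap, ← hsplit, hhead]
      ring
    rw [htail]
    have h8 : ((1:ℝ)/8) < 1 := by norm_num
    have h8' : (0:ℝ) ≤ 1/8 := by norm_num
    have hgeo : HasSum (fun i : ℕ => (c n * t^(n+1) * (1/8)) * (1/8)^i)
        (c n * t^(n+1) * (1/8) * (1 - 1/8)⁻¹) :=
      (hasSum_geometric_of_lt_one h8' h8).mul_left _
    have hbound : ∀ i : ℕ,
        ‖((c (i + (n+1)) * t ^ (i + (n+1)) : ℝ) : F) * f n (u (i + (n+1)))‖
          ≤ (c n * t^(n+1) * (1/8)) * (1/8)^i := by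
      intro i
      set m := i + (n+1) with hm_def
      have hnm : n < m := by omega
      rw [norm_mul, RCLike.norm_ofReal]
      have h1 : ‖f n (u m)‖ ≤ ‖f n‖ := by
        calc ‖f n (u m)‖ ≤ ‖f n‖ * ‖u m‖ := (f n).le_opNorm _
          _ = ‖f n‖ := by rw [hunorm m, mul_one]
      have htm : (0:ℝ) < t ^ m := pow_pos ht0 m
      rw [abs_of_pos (by positivity)]
      calc c m * t ^ m * ‖f n (u m)‖ ≤ c m * t ^ m * ‖f n‖ := by
            apply mul_le_mul_of_nonneg_left h1 (by positivity)
        _ = (c m * ‖f n‖) * t ^ m := by ring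
        _ ≤ ((1/8)^(m-n) * c n) * t ^ m := by
            apply mul_le_mul_of_nonneg_right (hkey n m hnm) htm.le
        _ = ((1/8)^(i+1) * c n) * (t ^ (n+1) * t ^ i) := by
            congr 2
            · congr 1; omega
            · rw [← pow_add]; congr 1; omega
        _ ≤ ((1/8)^(i+1) * c n) * (t ^ (n+1) * 1) := by
            apply mul_le_mul_of_nonneg_left _ (by positivity)
            apply mul_le_mul_of_nonneg_left _ (by positivity)
            exact pow_le_one₀ ht0.le ht1.le
        _ = (c n * t^(n+1) * (1/8)) * (1/8)^i := by
            rw [pow_succ]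
            ring
    calc ‖∑' i, ((c (i + (n+1)) * t ^ (i + (n+1)) : ℝ) : F) * f n (u (i + (n+1)))‖
        ≤ c n * t^(n+1) * (1/8) * (1 - 1/8)⁻¹ := tsum_of_norm_bounded hgeo hbound
      _ ≤ c n * t ^ (n+1) / 2 := by
          have hcn := hc_pos n
          have htn : (0:ℝ) < t^(n+1) := pow_pos ht0 _
          nlinarith
  -- linear independence of the continuum family
  have hind : LinearIndependent F (fun t : Set.Ioo (0:ℝ) 1 => xx t) := by
    rw [linearIndependent_iff']
    intro s g hsum0 j₀ hj₀
    by_contra hgj₀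
    set s' : Finset (Set.Ioo (0:ℝ) 1) := s.filter (fun i => g i ≠ 0) with hs'_def
    have hj₀s' : j₀ ∈ s' := Finset.mem_filter.2 ⟨hj₀, hgj₀⟩
    have hsum0' : ∑ i ∈ s', g i • xx i = 0 := by
      rw [← hsum0]
      exact Finset.sum_filter_of_ne (fun i _ hne h0 => hne (by rw [h0, zero_smul]))
    obtain ⟨j, hjs, hjmax⟩ := s'.exists_max_image (fun i => (i : ℝ)) ⟨j₀, hj₀s'⟩
    have hgj : g j ≠ 0 := (Finset.mem_filter.1 hjs).2
    have hT0 : (0:ℝ) < (j:ℝ) := j.2.1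
    have hT1 : (j:ℝ) < 1 := j.2.2
    -- the error terms
    set E : ℕ → Set.Ioo (0:ℝ) 1 → F :=
      fun n i => f n (xx i) - ((c n * (i:ℝ) ^ n : ℝ) : F) with hE_def
    have hE_bound : ∀ n (i : Set.Ioo (0:ℝ) 1), ‖E n i‖ ≤ c n * (i:ℝ) ^ (n+1) / 2 :=
      fun n i => happly n (i : ℝ) i.2
    set P : ℕ → F := fun n => ∑ i ∈ s', g i * (((i:ℝ) ^ n : ℝ) : F) with hP_def
    have hzero : ∀ n, ((c n : ℝ) : F) * P n = - ∑ i ∈ s', g i * E n i := by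
      intro n
      have h1 : (0:F) = ∑ i ∈ s', g i * f n (xx i) := by
        have := congrArg (f n) hsum0'
        rw [map_sum, map_zero] at this
        rw [← this]
        congr 1
        funext i
        rw [map_smul, smul_eq_mul]
      have h2 : ∀ i : Set.Ioo (0:ℝ) 1,
          g i * f n (xx i) = g i * ((c n : ℝ) : F) * (((i:ℝ) ^ n : ℝ) : F) + g i * E n i := by
        intro i
        have : f n (xx i) = ((c n * (i:ℝ) ^ n : ℝ) : F) + E n i := by
          simp only [E]; ring
        rw [this, RCLike.ofReal_mul]
        ring
      rw [hP_def, Finset.mul_sum]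
      have h3 : ∑ i ∈ s', ((c n : ℝ) : F) * (g i * (((i:ℝ) ^ n : ℝ) : F))
          = ∑ i ∈ s', g i * f n (xx i) - ∑ i ∈ s', g i * E n i := by
        rw [← Finset.sum_sub_distrib]
        congr 1
        funext i
        rw [h2 i]
        ring
      rw [h3, ← h1, zero_sub]
    have hP_bound : ∀ n, ‖P n‖ ≤ ∑ i ∈ s', ‖g i‖ * (i:ℝ) ^ (n+1) / 2 := by
      intro n
      have hcn := hc_pos n
      have h1 : c n * ‖P n‖ = ‖((c n : ℝ) : F) * P n‖ := by
        rw [norm_mul, RCLike.norm_ofReal, abs_of_pos hcn]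
      have h2 : ‖((c n : ℝ) : F) * P n‖ ≤ c n * ∑ i ∈ s', ‖g i‖ * (i:ℝ) ^ (n+1) / 2 := by
        rw [hzero n, norm_neg]
        calc ‖∑ i ∈ s', g i * E n i‖ ≤ ∑ i ∈ s', ‖g i * E n i‖ :=
              norm_sum_le _ _
          _ ≤ ∑ i ∈ s', c n * (‖g i‖ * (i:ℝ) ^ (n+1) / 2) := by
              apply Finset.sum_le_sum
              intro i _
              rw [norm_mul]
              calc ‖g i‖ * ‖E n i‖ ≤ ‖g i‖ * (c n * (i:ℝ) ^ (n+1) / 2) := by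
                    apply mul_le_mul_of_nonneg_left (hE_bound n i) (norm_nonneg _)
                _ = c n * (‖g i‖ * (i:ℝ) ^ (n+1) / 2) := by ring
          _ = c n * ∑ i ∈ s', ‖g i‖ * (i:ℝ) ^ (n+1) / 2 := by
              rw [Finset.mul_sum]
      have h3 : c n * ‖P n‖ ≤ c n * ∑ i ∈ s', ‖g i‖ * (i:ℝ) ^ (n+1) / 2 := by
        rw [h1]; exact h2
      exact le_of_mul_le_mul_left h3 hcn
    have hTn_pos : ∀ n : ℕ, (0:ℝ) < (j:ℝ) ^ n := fun n => pow_pos hT0 n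
    have hmain : ∀ n : ℕ, ‖g j‖ ≤
        (∑ i ∈ s'.erase j, (‖g i‖ + ‖g i‖ * (i:ℝ) / 2) * ((i:ℝ)/(j:ℝ))^n)
          + ‖g j‖ * (j:ℝ) / 2 := by
      intro n
      rw [← mul_le_mul_iff_of_pos_right (hTn_pos n)]
      have h2 : ‖g j‖ * (j:ℝ) ^ n ≤ ‖P n‖ + ∑ i ∈ s'.erase j, ‖g i‖ * (i:ℝ)^n := by
        have hsplitP : g j * (((j:ℝ) ^ n : ℝ) : F)
            = P n - ∑ i ∈ s'.erase j, g i * (((i:ℝ)^n : ℝ) : F) := by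
          simp only [hP_def]
          rw [← Finset.add_sum_erase s' (fun i => g i * (((i:ℝ)^n : ℝ) : F)) hjs]
          ring
        calc ‖g j‖ * (j:ℝ) ^ n = ‖g j * (((j:ℝ) ^ n : ℝ) : F)‖ := by
              rw [norm_mul, RCLike.norm_ofReal, abs_of_pos (hTn_pos n)]
          _ ≤ ‖P n‖ + ‖∑ i ∈ s'.erase j, g i * (((i:ℝ)^n : ℝ) : F)‖ := by
              rw [hsplitP]; exact norm_sub_le _ _
          _ ≤ ‖P n‖ + ∑ i ∈ s'.erase j, ‖g i‖ * (i:ℝ)^n := by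
              apply add_le_add_right
              calc ‖∑ i ∈ s'.erase j, g i * (((i:ℝ)^n : ℝ) : F)‖
                  ≤ ∑ i ∈ s'.erase j, ‖g i * (((i:ℝ)^n : ℝ) : F)‖ := norm_sum_le _ _
                _ = ∑ i ∈ s'.erase j, ‖g i‖ * (i:ℝ)^n := by
                    apply Finset.sum_congr rfl
                    intro i _
                    rw [norm_mul, RCLike.norm_ofReal, abs_of_pos (pow_pos i.2.1 n)]
      have hRHS : ((∑ i ∈ s'.erase j, (‖g i‖ + ‖g i‖ * (i:ℝ) / 2) * ((i:ℝ)/(j:ℝ))^n)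
            + ‖g j‖ * (j:ℝ) / 2) * (j:ℝ) ^ n
          = (∑ i ∈ s', ‖g i‖ * (i:ℝ)^(n+1)/2) + ∑ i ∈ s'.erase j, ‖g i‖ * (i:ℝ)^n := by
        rw [← Finset.add_sum_erase s' (fun i => ‖g i‖ * (i:ℝ)^(n+1)/2) hjs]
        rw [add_mul, Finset.sum_mul]
        have hterm : ∀ i ∈ s'.erase j, (‖g i‖ + ‖g i‖ * (i:ℝ) / 2) * ((i:ℝ)/(j:ℝ))^n * (j:ℝ)^n
            = ‖g i‖ * (i:ℝ)^(n+1)/2 + ‖g i‖ * (i:ℝ)^n := by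
          intro i _
          rw [div_pow]
          field_simp
          ring
        rw [Finset.sum_congr rfl hterm, Finset.sum_add_distrib]
        have hj_term : ‖g j‖ * (j:ℝ) / 2 * (j:ℝ) ^ n = ‖g j‖ * (j:ℝ)^(n+1)/2 := by
          rw [pow_succ]; ring
        rw [hj_term]
        ring
      rw [hRHS]
      have := hP_bound n
      linarith [h2]
    have hterm_lim : ∀ i ∈ s'.erase j, Tendsto
        (fun n : ℕ => (‖g i‖ + ‖g i‖ * (i:ℝ) / 2) * ((i:ℝ)/(j:ℝ))^n) atTop (𝓝 0) := by
      intro i hi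
      have hiT : (i:ℝ) < (j:ℝ) := by
        have hle : (i:ℝ) ≤ (j:ℝ) := hjmax i (Finset.mem_of_mem_erase hi)
        have hne : i ≠ j := Finset.ne_of_mem_erase hi
        exact lt_of_le_of_ne hle (fun hEq => hne (Subtype.coe_injective hEq))
      have hratio : Tendsto (fun n : ℕ => ((i:ℝ)/(j:ℝ))^n) atTop (𝓝 0) :=
        tendsto_pow_atTop_nhds_zero_of_lt_one (div_nonneg i.2.1.le hT0.le)
          ((div_lt_one hT0).2 hiT)
      simpa using hratio.const_mul (‖g i‖ + ‖g i‖ * (i:ℝ) / 2)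
    have hlim : Tendsto (fun n : ℕ =>
        (∑ i ∈ s'.erase j, (‖g i‖ + ‖g i‖ * (i:ℝ) / 2) * ((i:ℝ)/(j:ℝ))^n)
          + ‖g j‖ * (j:ℝ) / 2) atTop (𝓝 (0 + ‖g j‖ * (j:ℝ) / 2)) := by
      apply Tendsto.add_const
      have := tendsto_finset_sum (s'.erase j) hterm_lim
      simpa using this
    have hfinal : ‖g j‖ ≤ 0 + ‖g j‖ * (j:ℝ) / 2 :=
      ge_of_tendsto hlim (Filter.Eventually.of_forall hmain)
    have hpos : 0 < ‖g j‖ := norm_pos_iff.2 hgj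
    nlinarith
  calc 𝔠 = #(Set.Ioo (0:ℝ) 1) := (Cardinal.mk_Ioo_real (by norm_num : (0:ℝ) < 1)).symm
    _ ≤ Module.rank F X := hind.cardinal_le_rank


/-- Every infinite-dimensional separable Banach space over `F ∈ {ℝ, ℂ}` has
algebraic dimension exactly `2 ^ ℵ₀` (the cardinality of the continuum). -/
theorem stmt5 (F : Type) [RCLike F] (X : Type) [NormedAddCommGroup X] [NormedSpace F X]
    [CompleteSpace X] [TopologicalSpace.SeparableSpace X]
    (h : ℵ₀ ≤ Module.rank F X) :
    Module.rank F X = Cardinal.continuum := by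
  refine le_antisymm ?_ (continuum_le_rank_aux F X h)
  exact (rank_le_card F X).trans (mk_le_continuum_of_separable X)
end

section
/- Let F be the field ℝ or ℂ and let V be an F-vector space whose algebraic dimension is at least 2^ℵ₀. Then the set 𝒵(V) of all linear subspaces Z ≤ V with dim Z = dim V and dim(V/Z) < ℵ₀ has cardinality 2^|V|, which is strictly greater than |V| = dim V. -/
open Cardinal

section Aux

variable (F : Type) [RCLike F]

lemma auxF_mk : #F = Cardinal.continuum := by
  apply le_antisymm
  · have : Function.Injective (fun z : F => (RCLike.re z, RCLike.im z)) := by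
      intro a b hab
      simp only [Prod.mk.injEq] at hab
      exact RCLike.ext hab.1 hab.2
    calc #F ≤ #(ℝ × ℝ) := Cardinal.mk_le_of_injective this
      _ = Cardinal.continuum := by
          rw [Cardinal.mk_prod, Cardinal.mk_real]
          simp [Cardinal.mul_eq_self (le_refl _)]
  · have : Function.Injective (algebraMap ℝ F) := (algebraMap ℝ F).injective
    calc Cardinal.continuum = #ℝ := Cardinal.mk_real.symm
      _ ≤ #F := Cardinal.mk_le_of_injective this

end Aux

/-- If `V` is a vector space over `F ∈ {ℝ, ℂ}` of algebraic dimension at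
least `2 ^ ℵ₀`, then the set `𝒵(V)` of linear subspaces `Z ≤ V` of full algebraic
dimension and finite codimension has cardinality `2 ^ |V|`, which is strictly greater
than `|V| = dim V`. -/
theorem stmt8 (F : Type) [RCLike F] (V : Type) [AddCommGroup V] [Module F V]
    (h : Cardinal.continuum ≤ Module.rank F V) :
    #{Z : Submodule F V //
        Module.rank F Z = Module.rank F V ∧ Module.rank F (V ⧸ Z) < ℵ₀} = 2 ^ #V ∧
    #V < 2 ^ #V ∧ (#V : Cardinal) = Module.rank F V := by
  classical
  set κ := Module.rank F V with hκdef
  have hℵ₀ : ℵ₀ ≤ κ := le_trans Cardinal.aleph0_le_continuum h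
  have hF : #F = Cardinal.continuum := auxF_mk F
  set ι := Module.Basis.ofVectorSpaceIndex F V with hιdef
  let b : Module.Basis ι F V := Module.Basis.ofVectorSpace F V
  have hι : #ι = κ := b.mk_eq_rank''
  have hιinf : Infinite ι := by
    rw [Cardinal.infinite_iff, hι]; exact hℵ₀
  -- cardinality of V
  have hV : #V = κ := by
    have h1 : #V = #(ι →₀ F) := Cardinal.mk_congr b.repr.toEquiv
    rw [h1, Cardinal.mk_finsupp_of_infinite, hι, hF, max_eq_left h]
  refine ⟨?_, Cardinal.cantor _, hV.trans hκdef⟩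
  -- upper bound
  have up : #{Z : Submodule F V //
      Module.rank F Z = κ ∧ Module.rank F (V ⧸ Z) < ℵ₀} ≤ 2 ^ #V := by
    calc #{Z : Submodule F V // Module.rank F Z = κ ∧ Module.rank F (V ⧸ Z) < ℵ₀}
        ≤ #(Submodule F V) := Cardinal.mk_subtype_le _
      _ ≤ #(Set V) := Cardinal.mk_le_of_injective (SetLike.coe_injective)
      _ = 2 ^ #V := Cardinal.mk_set
  -- lower bound
  obtain ⟨i₀⟩ : Nonempty ι := inferInstance
  let coeff : Set {i : ι // i ≠ i₀} → ι → F := fun S i =>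
    if h : i = i₀ then 1 else if (⟨i, h⟩ : {i : ι // i ≠ i₀}) ∈ S then 1 else 0
  let φ : Set {i : ι // i ≠ i₀} → (V →ₗ[F] F) := fun S => b.constr ℕ (coeff S)
  have hφb : ∀ S i, φ S (b i) = coeff S i := fun S i => b.constr_basis ℕ (coeff S) i
  let Z : Set {i : ι // i ≠ i₀} → Submodule F V := fun S => LinearMap.ker (φ S)
  have hquot : ∀ S, Module.rank F (V ⧸ Z S) < ℵ₀ := by
    intro S
    have e : Module.rank F (V ⧸ Z S) = Module.rank F (LinearMap.range (φ S)) :=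
      (φ S).quotKerEquivRange.rank_eq
    rw [e]
    exact lt_of_le_of_lt ((Submodule.rank_le _).trans_eq (Module.rank_self F))
      Cardinal.one_lt_aleph0
  have hrank : ∀ S, Module.rank F (Z S) = κ := by
    intro S
    have hsum : Module.rank F (V ⧸ Z S) + Module.rank F (Z S) = κ :=
      Submodule.rank_quotient_add_rank (Z S)
    by_contra hne
    have hlt : Module.rank F (Z S) < κ := lt_of_le_of_ne (Submodule.rank_le _) hne
    have : Module.rank F (V ⧸ Z S) + Module.rank F (Z S) < κ :=
      Cardinal.add_lt_of_lt hℵ₀ (lt_of_lt_of_le (hquot S) hℵ₀) hlt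
    exact absurd hsum this.ne
  -- injectivity of Z
  have hZinj : Function.Injective Z := by
    intro S T hST
    ext j
    have hj : (j : ι) ≠ i₀ := j.2
    have hcoeff : coeff S j = coeff T j := by
      have hv : b (j : ι) - coeff S (j : ι) • b i₀ ∈ Z S := by
        simp only [Z, LinearMap.mem_ker, map_sub, map_smul, hφb]
        simp [coeff, hj]
      rw [hST] at hv
      have := hv
      simp only [Z, LinearMap.mem_ker, map_sub, map_smul, hφb] at this
      have hc : coeff T (j : ι) - coeff S (j : ι) * coeff T i₀ = 0 := this
      have h0 : coeff T i₀ = 1 := by simp [coeff]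
      rw [h0, mul_one, sub_eq_zero] at hc
      exact hc.symm
    simp only [coeff, dif_neg hj] at hcoeff
    by_cases hS : j ∈ S <;> by_cases hT : j ∈ T <;>
      simp_all
  have low : 2 ^ #V ≤ #{Z : Submodule F V //
      Module.rank F Z = κ ∧ Module.rank F (V ⧸ Z) < ℵ₀} := by
    have hcompl : #{i : ι // i ≠ i₀} = κ := by
      have h1 : #({i₀} : Set ι) < #ι := by
        rw [Cardinal.mk_singleton, hι]
        exact lt_of_lt_of_le Cardinal.one_lt_aleph0 hℵ₀
      have h2 : #(↥(({i₀} : Set ι)ᶜ)) = #ι := Cardinal.mk_compl_of_infinite _ h1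
      have h3 : #{i : ι // i ≠ i₀} = #(↥(({i₀} : Set ι)ᶜ)) :=
        Cardinal.mk_congr (Equiv.subtypeEquivRight (by simp [Set.mem_compl_iff]))
      rw [h3, h2, hι]
    have hinj : Function.Injective (fun S : Set {i : ι // i ≠ i₀} =>
        (⟨Z S, hrank S, hquot S⟩ : {Z : Submodule F V //
          Module.rank F Z = κ ∧ Module.rank F (V ⧸ Z) < ℵ₀})) := by
      intro S T hST
      exact hZinj (congrArg Subtype.val hST)
    calc 2 ^ #V = #(Set {i : ι // i ≠ i₀}) := by
          rw [Cardinal.mk_set, hcompl, hV]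
      _ ≤ _ := Cardinal.mk_le_of_injective hinj
  exact le_antisymm up low
end

section
/- Let F be the field ℝ or ℂ and let X be a separable normed F-vector space whose algebraic dimension equals 2^ℵ₀. Then the set 𝒵_cl(X) of all topologically closed linear subspaces Z ≤ X with dim Z = dim X and dim(X/Z) < ℵ₀ has cardinality equal to the cardinality of X, namely 2^ℵ₀; moreover the set 𝒲(X) of all finite-dimensional subspaces of X also has cardinality 2^ℵ₀. -/
open Cardinal

open TopologicalSpace in
/-- A separable metric space has cardinality at most continuum. -/
lemma aux_card_le (X : Type) [MetricSpace X] [SeparableSpace X] : #X ≤ 𝔠 := by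
  obtain ⟨c, hc, hdense⟩ := TopologicalSpace.exists_countable_dense X
  have key : ∀ x : X, ∃ u : ℕ → c, Filter.Tendsto (fun n => (u n : X)) Filter.atTop (nhds x) := by
    intro x
    have hx : x ∈ closure c := hdense x
    rw [mem_closure_iff_seq_limit] at hx
    obtain ⟨u, hu, hl⟩ := hx
    exact ⟨fun n => ⟨u n, hu n⟩, hl⟩
  choose u hu using key
  have hinj : Function.Injective u := by
    intro x y hxy
    exact tendsto_nhds_unique (hu x) (hxy ▸ hu y)
  have := hc.to_subtype
  calc #X ≤ #(ℕ → c) := Cardinal.mk_le_of_injective hinj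
    _ = #c ^ (ℵ₀ : Cardinal) := by rw [← Cardinal.mk_nat]; exact (Cardinal.power_def _ _).symm
    _ ≤ (ℵ₀ : Cardinal) ^ (ℵ₀ : Cardinal) := Cardinal.power_le_power_right Cardinal.mk_le_aleph0
    _ = 𝔠 := Cardinal.aleph0_power_aleph0

open TopologicalSpace in
/-- Any family of closed submodules of a separable normed space injects into `ℕ → X`. -/
lemma aux_closed_card_le (F X : Type) [RCLike F] [NormedAddCommGroup X] [NormedSpace F X]
    [SeparableSpace X] (P : Submodule F X → Prop)
    (hP : ∀ Z, P Z → IsClosed (Z : Set X)) : #{Z : Submodule F X // P Z} ≤ #(ℕ → X) := by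
  haveI : SecondCountableTopology X := UniformSpace.secondCountable_of_separable X
  have key : ∀ Z : {Z : Submodule F X // P Z},
      ∃ u : ℕ → X, closure (Set.range u) = ((Z : Submodule F X) : Set X) := by
    rintro ⟨Z, hZ⟩
    obtain ⟨t, htc, htd⟩ := TopologicalSpace.exists_countable_dense (↥Z)
    have hsub : Subtype.val '' t ⊆ (Z : Set X) := by
      rintro x ⟨⟨x, hx⟩, _, rfl⟩; exact hx
    have hZsub : (Z : Set X) ⊆ closure (Subtype.val '' t) := by
      intro z hz
      have : (⟨z, hz⟩ : ↥Z) ∈ closure t := htd _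
      exact closure_subtype.mp this
    have hcl : closure (Subtype.val '' t) = (Z : Set X) :=
      le_antisymm (closure_minimal hsub (hP Z hZ)) hZsub
    have hne : (Subtype.val '' t).Nonempty := by
      by_contra hemp
      rw [Set.not_nonempty_iff_eq_empty] at hemp
      have : (0 : X) ∈ closure (Subtype.val '' t) := hcl ▸ Z.zero_mem
      simp [hemp] at this
    obtain ⟨u, hu⟩ := (htc.image Subtype.val).exists_eq_range hne
    exact ⟨u, by rw [← hu, hcl]⟩
  choose u hu using key
  refine Cardinal.mk_le_of_injective (f := u) ?_
  intro Z₁ Z₂ h12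
  ext1
  apply SetLike.coe_injective
  rw [← hu Z₁, ← hu Z₂, h12]

/-- If `X` is a separable normed space over `F ∈ {ℝ, ℂ}` of algebraic
dimension exactly `2 ^ ℵ₀`, then the set `𝒵_cl(X)` of topologically closed linear
subspaces of full algebraic dimension and finite codimension has cardinality
`|X| = 2 ^ ℵ₀`, and the set `𝒲(X)` of finite-dimensional subspaces of `X` also has
cardinality `2 ^ ℵ₀`. -/
theorem stmt10 (F : Type) [RCLike F] (X : Type) [NormedAddCommGroup X] [NormedSpace F X]
    [TopologicalSpace.SeparableSpace X]
    (h : Module.rank F X = Cardinal.continuum) :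
    #{Z : Submodule F X // IsClosed (Z : Set X) ∧
        Module.rank F Z = Module.rank F X ∧ Module.rank F (X ⧸ Z) < ℵ₀} = #X ∧
    #X = Cardinal.continuum ∧
    #{W : Submodule F X // Module.rank F W < ℵ₀} = Cardinal.continuum := by
  -- cardinality of X
  have hXle : #X ≤ 𝔠 := aux_card_le X
  have hXge : 𝔠 ≤ #X := h ▸ rank_le_card F X
  have hX : #X = 𝔠 := le_antisymm hXle hXge
  have harrow : #(ℕ → X) = 𝔠 := by
    rw [show #(ℕ → X) = #X ^ (ℵ₀ : Cardinal) by
      rw [← Cardinal.mk_nat]; exact (Cardinal.power_def _ _).symm,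
      hX, Cardinal.continuum_power_aleph0]
  -- a basis
  let b := Module.Basis.ofVectorSpace F X
  have hb : #(Module.Basis.ofVectorSpaceIndex F X) = 𝔠 := by rw [b.mk_eq_rank'', h]
  haveI : Infinite (Module.Basis.ofVectorSpaceIndex F X) := by
    rw [Cardinal.infinite_iff, hb]; exact Cardinal.aleph0_le_continuum
  obtain ⟨i, j, hij⟩ := exists_pair_ne (Module.Basis.ofVectorSpaceIndex F X)
  have hnsmul : ∀ (k l : Module.Basis.ofVectorSpaceIndex F X), k ≠ l → ∀ c : F, b k ≠ c • b l := by
    intro k l hkl c hc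
    have := congrArg (fun v => (b.repr v) k) hc
    simp only [Module.Basis.repr_self, map_smul, Finsupp.smul_apply, smul_eq_mul,
      Finsupp.single_eq_same, Finsupp.single_eq_of_ne hkl, mul_zero] at this
    exact one_ne_zero this
  -- the finite-dimensional subspaces
  have hW : #{W : Submodule F X // Module.rank F W < ℵ₀} = 𝔠 := by
    apply le_antisymm
    · refine le_trans (aux_closed_card_le F X _ ?_) (le_of_eq harrow)
      intro Z hZ
      haveI : FiniteDimensional F Z := Module.rank_lt_aleph0_iff.mp hZ
      exact Z.closed_of_finiteDimensional
    · rw [← hb]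
      refine Cardinal.mk_le_of_injective
        (f := fun k => (⟨Submodule.span F {(b k : X)}, ?_⟩ :
          {W : Submodule F X // Module.rank F W < ℵ₀})) ?_
      · exact lt_of_le_of_lt (le_trans (rank_span_le _) (le_of_eq (Cardinal.mk_singleton _)))
          Cardinal.one_lt_aleph0
      · intro k l hkl
        simp only [Subtype.mk.injEq] at hkl
        by_contra hne
        have : (b k : X) ∈ Submodule.span F {(b l : X)} := by
          rw [← hkl]; exact Submodule.mem_span_singleton_self _
        obtain ⟨c, hc⟩ := Submodule.mem_span_singleton.mp this
        exact hnsmul k l hne c hc.symm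
  -- the functionals
  have hx0 : (b i : X) ≠ 0 := b.ne_zero i
  obtain ⟨f, hf⟩ := SeparatingDual.exists_eq_one (R := F) hx0
  set x := (b i : X)
  set y' : X := (b j : X) - f (b j) • x with hy'def
  have hy'0 : y' ≠ 0 := by
    intro hy0
    have : (b j : X) = f (b j) • x := by
      rw [hy'def] at hy0; linear_combination (norm := abel) hy0
    exact hnsmul j i hij.symm _ this
  have hfy' : f y' = 0 := by simp [hy'def, hf]
  obtain ⟨g₀, hg₀⟩ := SeparatingDual.exists_eq_one (R := F) hy'0
  set g : X →L[F] F := g₀ - g₀ x • f with hgdef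
  have hgx : g x = 0 := by simp [hgdef, hf]
  have hgy' : g y' = 1 := by simp [hgdef, hg₀, hfy']
  -- the family of closed hyperplanes
  have hZ : #{Z : Submodule F X // IsClosed (Z : Set X) ∧
      Module.rank F Z = Module.rank F X ∧ Module.rank F (X ⧸ Z) < ℵ₀} = 𝔠 := by
    apply le_antisymm
    · exact le_trans (aux_closed_card_le F X _ (fun Z hZ => hZ.1)) (le_of_eq harrow)
    · rw [← Cardinal.mk_real]
      have key : ∀ t : ℝ, ∃ Z : Submodule F X, (IsClosed (Z : Set X) ∧
          Module.rank F Z = Module.rank F X ∧ Module.rank F (X ⧸ Z) < ℵ₀) ∧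
          (y' - (t : F) • x ∈ Z) ∧ ∀ s : ℝ, y' - (s : F) • x ∈ Z → s = t := by
        intro t
        set ht : X →L[F] F := f + (t : F) • g with htdef
        have htx : ht x = 1 := by simp [htdef, hf, hgx]
        have happ : ∀ s : ℝ, ht (y' - (s : F) • x) = (t : F) - (s : F) := by
          intro s
          simp only [htdef, ContinuousLinearMap.add_apply, ContinuousLinearMap.smul_apply,
            map_sub, map_smul, hfy', hgy', hf, hgx, smul_eq_mul]
          ring
        have hsurj : Function.Surjective (ht : X →ₗ[F] F) := by
          intro c
          exact ⟨c • x, by simp [map_smul, htx, smul_eq_mul]⟩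
        refine ⟨LinearMap.ker (ht : X →ₗ[F] F), ⟨?_, ?_, ?_⟩, ?_, ?_⟩
        · have : ((LinearMap.ker (ht : X →ₗ[F] F) : Submodule F X) : Set X)
              = ht ⁻¹' {0} := by
            ext v; simp [LinearMap.mem_ker]
          rw [this]
          exact IsClosed.preimage ht.continuous isClosed_singleton
        · -- full rank
          have hq : Module.rank F (X ⧸ LinearMap.ker (ht : X →ₗ[F] F)) = 1 := by
            rw [LinearEquiv.rank_eq ((ht : X →ₗ[F] F).quotKerEquivOfSurjective hsurj)]
            exact Module.rank_self F
          have hsum := rank_quotient_add_rank_of_divisionRing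
            (LinearMap.ker (ht : X →ₗ[F] F))
          rw [hq, h] at hsum
          have hinf : ℵ₀ ≤ Module.rank F (LinearMap.ker (ht : X →ₗ[F] F)) := by
            by_contra hlt
            push_neg at hlt
            have : (1 : Cardinal) + Module.rank F (LinearMap.ker (ht : X →ₗ[F] F)) < ℵ₀ :=
              Cardinal.add_lt_aleph0 Cardinal.one_lt_aleph0 hlt
            rw [hsum] at this
            exact absurd this (not_lt.mpr Cardinal.aleph0_le_continuum)
          rw [h, ← hsum, Cardinal.add_eq_right hinf (le_trans Cardinal.one_le_aleph0 hinf)]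
        · -- finite codim
          rw [LinearEquiv.rank_eq ((ht : X →ₗ[F] F).quotKerEquivOfSurjective hsurj),
            Module.rank_self F]
          exact Cardinal.one_lt_aleph0
        · rw [LinearMap.mem_ker]
          show ht (y' - (t : F) • x) = 0
          rw [happ t, sub_self]
        · intro s hs
          rw [LinearMap.mem_ker] at hs
          have h2 : (t : F) - (s : F) = 0 := by rw [← happ s]; exact hs
          have h3 : (s : F) = (t : F) := by linear_combination -h2
          exact_mod_cast h3
      choose Z hZprop hmem huniq using key
      refine Cardinal.mk_le_of_injective (f := fun t => (⟨Z t, hZprop t⟩ : _)) ?_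
      intro s t hst
      simp only [Subtype.mk.injEq] at hst
      exact huniq t s (hst ▸ hmem s)
  exact ⟨hX ▸ hZ, hX, hW⟩
end
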